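/- For subsets I, J ⊆ {1,…,m}, the intersection relint(cone{γ_i : i ∉ I}) ∩ relint(cone{γ_j : j ∉ J}) is nonempty if and only if there exists w ∈ W such that a_i(w) = 0 for all i ∈ I ∩ J, a_i(w) > 0 for all i ∈ J \ I, and a_i(w) < 0 for all i ∈ I \ J. Moreover, for any such w one has cone{a_i : i ∈ I} ∩ cone{a_j : j ∈ J} = cone{a_i : i ∈ I ∩ J} = {ξ ∈ cone{a_i : i ∈ I} : ξ(w) = 0}. -/

import Mathlib

open Set

/-- The cone generated by the vectors `v i` for `i ∈ I`: all nonnegative linear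
combinations of the `v i`, `i ∈ I`. -/
def coneOf {E : Type*} [AddCommGroup E] [Module ℝ E] {m : ℕ}
    (v : Fin m → E) (I : Set (Fin m)) : Set E :=
  {x | ∃ c : Fin m → ℝ, (∀ i, 0 ≤ c i) ∧ (∀ i ∉ I, c i = 0) ∧ x = ∑ i, c i • v i}

section Helpers

variable {E : Type*} [AddCommGroup E] [Module ℝ E] {m : ℕ}

lemma zero_mem_coneOf (v : Fin m → E) (S : Set (Fin m)) : (0 : E) ∈ coneOf v S :=
  ⟨0, fun _ => le_refl 0, fun _ _ => rfl, by simp⟩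

lemma coneOf_mono (v : Fin m → E) {S T : Set (Fin m)} (h : S ⊆ T) :
    coneOf v S ⊆ coneOf v T := by
  rintro x ⟨c, h1, h2, rfl⟩
  exact ⟨c, h1, fun i hi => h2 i fun hS => hi (h hS), rfl⟩

lemma mem_coneOf_self (v : Fin m → E) {S : Set (Fin m)} {i : Fin m} (hi : i ∈ S) :
    v i ∈ coneOf v S := by
  classical
  refine ⟨fun j => if j = i then 1 else 0, fun j => by positivity, fun j hj => ?_, ?_⟩
  · show (if j = i then (1 : ℝ) else 0) = 0
    rw [if_neg]; rintro rfl; exact hj hi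
  · rw [Finset.sum_eq_single i]
    · simp
    · intro j _ hj
      show (if j = i then (1 : ℝ) else 0) • v j = 0
      rw [if_neg hj, zero_smul]
    · intro h; exact absurd (Finset.mem_univ i) h

lemma coneOf_subset_span (v : Fin m → E) (S : Set (Fin m)) :
    coneOf v S ⊆ (Submodule.span ℝ (v '' S) : Set E) := by
  rintro x ⟨c, _, h2, rfl⟩
  apply Submodule.sum_mem
  intro i _
  by_cases hi : i ∈ S
  · exact Submodule.smul_mem _ _ (Submodule.subset_span ⟨i, hi, rfl⟩)
  · rw [h2 i hi, zero_smul]; exact Submodule.zero_mem _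

end Helpers

section Normed

variable {E : Type*} [NormedAddCommGroup E] [NormedSpace ℝ E] {m : ℕ}

/-- Metric characterization of the intrinsic interior. -/
lemma mem_intrinsicInterior_iff_dist {s : Set E} {x : E} :
    x ∈ intrinsicInterior ℝ s ↔ x ∈ affineSpan ℝ s ∧
      ∃ ε > 0, ∀ y ∈ affineSpan ℝ s, dist y x < ε → y ∈ s := by
  rw [mem_intrinsicInterior]
  constructor
  · rintro ⟨y, hy, rfl⟩
    refine ⟨y.2, ?_⟩
    rw [mem_interior_iff_mem_nhds, Metric.mem_nhds_iff] at hy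
    obtain ⟨ε, hε, hball⟩ := hy
    refine ⟨ε, hε, fun z hz hdz => ?_⟩
    have hmem : (⟨z, hz⟩ : affineSpan ℝ s) ∈ Metric.ball y ε := by
      rw [Metric.mem_ball, Subtype.dist_eq]; exact hdz
    exact hball hmem
  · rintro ⟨hx, ε, hε, h⟩
    refine ⟨⟨x, hx⟩, ?_, rfl⟩
    rw [mem_interior_iff_mem_nhds, Metric.mem_nhds_iff]
    exact ⟨ε, hε, fun z hz =>
      h z z.2 (by rwa [Metric.mem_ball, Subtype.dist_eq] at hz)⟩

lemma affineSpan_coneOf (v : Fin m → E) (S : Set (Fin m)) :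
    (affineSpan ℝ (coneOf v S) : Set E) = (Submodule.span ℝ (v '' S) : Set E) := by
  rw [show coneOf v S = insert (0 : E) (coneOf v S) from
    (Set.insert_eq_of_mem (zero_mem_coneOf v S)).symm, affineSpan_insert_zero]
  have heq : Submodule.span ℝ (coneOf v S) = Submodule.span ℝ (v '' S) := by
    apply le_antisymm
    · exact Submodule.span_le.2 (coneOf_subset_span v S)
    · apply Submodule.span_le.2
      rintro x ⟨i, hi, rfl⟩
      exact Submodule.subset_span (mem_coneOf_self v hi)
  rw [heq]

/-- Bounded representation lemma: elements of the span of `{v i : i ∈ S}` admit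
representations with coefficients supported on `S` and bounded by a uniform
constant times the norm. -/
lemma exists_bounded_rep [FiniteDimensional ℝ E] (v : Fin m → E) (S : Set (Fin m)) :
    ∃ C > 0, ∀ y ∈ Submodule.span ℝ (v '' S), ∃ d : Fin m → ℝ,
      (∀ i ∉ S, d i = 0) ∧ y = ∑ i, d i • v i ∧ ∀ i, |d i| ≤ C * ‖y‖ := by
  classical
  set L := Submodule.span ℝ (v '' S) with hL
  set Φ : (Fin m → ℝ) →ₗ[ℝ] E :=
    ∑ i : Fin m, if i ∈ S then (LinearMap.proj i).smulRight (v i) else 0 with hΦdef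
  have hΦ : ∀ d : Fin m → ℝ, Φ d = ∑ i, (if i ∈ S then d i else 0) • v i := by
    intro d
    rw [hΦdef, LinearMap.sum_apply]
    apply Finset.sum_congr rfl
    intro i _
    split <;> simp
  have hΦmem : ∀ d, Φ d ∈ L := by
    intro d
    rw [hΦ]
    apply Submodule.sum_mem
    intro i _
    by_cases hi : i ∈ S
    · exact Submodule.smul_mem _ _ (Submodule.subset_span ⟨i, hi, rfl⟩)
    · rw [if_neg hi, zero_smul]; exact Submodule.zero_mem _
  set Ψ : (Fin m → ℝ) →ₗ[ℝ] L := Φ.codRestrict L hΦmem with hΨdef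
  have hΨsurj : Function.Surjective Ψ := by
    rintro ⟨y, hy⟩
    have : ∃ d : Fin m → ℝ, Φ d = y := by
      induction hy using Submodule.span_induction with
      | mem x hx =>
        obtain ⟨i, hi, rfl⟩ := hx
        refine ⟨Pi.single i 1, ?_⟩
        rw [hΦ, Finset.sum_eq_single i]
        · simp [hi]
        · intro j _ hj
          rw [Pi.single_eq_of_ne hj]
          split <;> simp
        · intro h; exact absurd (Finset.mem_univ i) h
      | zero => exact ⟨0, map_zero Φ⟩
      | add x y _ _ hx hy =>
        obtain ⟨d1, hd1⟩ := hx; obtain ⟨d2, hd2⟩ := hy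
        exact ⟨d1 + d2, by rw [map_add, hd1, hd2]⟩
      | smul r x _ hx =>
        obtain ⟨d, hd⟩ := hx
        exact ⟨r • d, by rw [map_smul, hd]⟩
    obtain ⟨d, hd⟩ := this
    exact ⟨d, Subtype.ext hd⟩
  obtain ⟨g, hg⟩ := Ψ.exists_rightInverse_of_surjective (LinearMap.range_eq_top.2 hΨsurj)
  have hgcont : Continuous g := g.continuous_of_finiteDimensional
  let G : L →L[ℝ] (Fin m → ℝ) := ⟨g, hgcont⟩
  refine ⟨‖G‖ + 1, by positivity, ?_⟩
  intro y hy
  set z : L := ⟨y, hy⟩ with hz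
  set e : Fin m → ℝ := g z with he
  have h0 : Ψ (g z) = z := by rw [← LinearMap.comp_apply, hg, LinearMap.id_apply]
  have h1 : Φ e = y := congrArg Subtype.val h0
  refine ⟨fun i => if i ∈ S then e i else 0, fun i hi => if_neg hi, ?_, ?_⟩
  · rw [← hΦ, h1]
  · intro i
    have h2 : |(if i ∈ S then e i else 0)| ≤ |e i| := by
      split
      · exact le_refl _
      · simp [abs_nonneg]
    have h3 : |e i| ≤ ‖e‖ := by
      simpa [Real.norm_eq_abs] using norm_le_pi_norm e i
    have h4 : ‖e‖ ≤ ‖G‖ * ‖y‖ := by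
      have := G.le_opNorm z
      exact this
    have h6 : (0 : ℝ) ≤ ‖y‖ := norm_nonneg y
    have h7 : (0 : ℝ) ≤ ‖G‖ := norm_nonneg G
    calc |(if i ∈ S then e i else 0)| ≤ |e i| := h2
      _ ≤ ‖e‖ := h3
      _ ≤ ‖G‖ * ‖y‖ := h4
      _ ≤ (‖G‖ + 1) * ‖y‖ := by
        apply mul_le_mul_of_nonneg_right _ h6
        linarith

end Normed

section Char

variable {E : Type*} [NormedAddCommGroup E] [NormedSpace ℝ E] [FiniteDimensional ℝ E] {m : ℕ}

/-- Characterization of the intrinsic interior (relative interior) of a finitely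
generated cone: the points representable with strictly positive coefficients. -/
lemma mem_intrinsicInterior_coneOf (v : Fin m → E) (S : Set (Fin m)) (x : E) :
    x ∈ intrinsicInterior ℝ (coneOf v S) ↔
      ∃ c : Fin m → ℝ, (∀ i ∈ S, 0 < c i) ∧ (∀ i ∉ S, c i = 0) ∧ x = ∑ i, c i • v i := by
  classical
  rw [mem_intrinsicInterior_iff_dist]
  constructor
  · rintro ⟨hx, ε, hε, hball⟩
    set s₀ : E := ∑ i, (if i ∈ S then (1 : ℝ) else 0) • v i with hs₀
    have hs₀L : s₀ ∈ Submodule.span ℝ (v '' S) := by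
      apply Submodule.sum_mem
      intro i _
      by_cases hi : i ∈ S
      · exact Submodule.smul_mem _ _ (Submodule.subset_span ⟨i, hi, rfl⟩)
      · rw [if_neg hi, zero_smul]; exact Submodule.zero_mem _
    have hxL : x ∈ Submodule.span ℝ (v '' S) := by
      have : x ∈ (affineSpan ℝ (coneOf v S) : Set E) := hx
      rwa [affineSpan_coneOf] at this
    set t : ℝ := ε / (2 * (‖s₀‖ + 1)) with ht
    have hs₀pos : (0 : ℝ) < ‖s₀‖ + 1 := by positivity
    have htpos : 0 < t := by positivity
    set y : E := x - t • s₀ with hy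
    have hyL : y ∈ Submodule.span ℝ (v '' S) :=
      Submodule.sub_mem _ hxL (Submodule.smul_mem _ _ hs₀L)
    have hyA : y ∈ affineSpan ℝ (coneOf v S) := by
      have : y ∈ (affineSpan ℝ (coneOf v S) : Set E) := by
        rw [affineSpan_coneOf]; exact hyL
      exact this
    have hdist : dist y x < ε := by
      rw [dist_eq_norm]
      have : y - x = -(t • s₀) := by rw [hy]; abel
      rw [this, norm_neg, norm_smul, Real.norm_eq_abs, abs_of_pos htpos]
      have h1 : t * ‖s₀‖ < t * (‖s₀‖ + 1) := by
        apply mul_lt_mul_of_pos_left _ htpos; linarith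
      have h2 : t * (‖s₀‖ + 1) = ε / 2 := by
        rw [ht]; field_simp
      linarith
    obtain ⟨c, hc0, hcsupp, hyc⟩ := hball y hyA hdist
    refine ⟨fun i => c i + if i ∈ S then t else 0, ?_, ?_, ?_⟩
    · intro i hi
      have := hc0 i
      show 0 < c i + if i ∈ S then t else 0
      rw [if_pos hi]
      linarith
    · intro i hi
      show c i + (if i ∈ S then t else 0) = 0
      rw [hcsupp i hi, if_neg hi, add_zero]
    · have hts₀ : t • s₀ = ∑ i, (if i ∈ S then t else (0 : ℝ)) • v i := by
        rw [hs₀, Finset.smul_sum]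
        apply Finset.sum_congr rfl
        intro i _
        split <;> simp [smul_smul]
      have : x = y + t • s₀ := by rw [hy]; abel
      rw [this, hyc, hts₀, ← Finset.sum_add_distrib]
      apply Finset.sum_congr rfl
      intro i _
      rw [add_smul]
  · rintro ⟨c, hcpos, hcsupp, rfl⟩
    have hc0 : ∀ i, 0 ≤ c i := by
      intro i
      by_cases hi : i ∈ S
      · exact le_of_lt (hcpos i hi)
      · rw [hcsupp i hi]
    have hxcone : (∑ i, c i • v i) ∈ coneOf v S := ⟨c, hc0, hcsupp, rfl⟩
    have hxL : (∑ i, c i • v i) ∈ Submodule.span ℝ (v '' S) := coneOf_subset_span v S hxcone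
    refine ⟨subset_affineSpan ℝ _ hxcone, ?_⟩
    obtain ⟨C, hC, hbound⟩ := exists_bounded_rep v S
    obtain ⟨δ, hδ, hδle⟩ : ∃ δ > 0, ∀ i ∈ S, δ ≤ c i := by
      by_cases hne : (Finset.univ.filter (· ∈ S)).Nonempty
      · refine ⟨(Finset.univ.filter (· ∈ S)).inf' hne c, ?_, ?_⟩
        · exact (Finset.lt_inf'_iff hne).mpr fun i hi => hcpos i (Finset.mem_filter.mp hi).2
        · intro i hi
          exact Finset.inf'_le c (Finset.mem_filter.mpr ⟨Finset.mem_univ i, hi⟩)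
      · refine ⟨1, one_pos, fun i hi => absurd ⟨i, Finset.mem_filter.mpr ⟨Finset.mem_univ i, hi⟩⟩ hne⟩
    refine ⟨δ / C, by positivity, ?_⟩
    intro y hyA hdist
    have hyL : y ∈ Submodule.span ℝ (v '' S) := by
      have : y ∈ (affineSpan ℝ (coneOf v S) : Set E) := hyA
      rwa [affineSpan_coneOf] at this
    have hzL : y - ∑ i, c i • v i ∈ Submodule.span ℝ (v '' S) := Submodule.sub_mem _ hyL hxL
    obtain ⟨d, hdsupp, hzd, hdbd⟩ := hbound _ hzL
    have hznorm : ‖y - ∑ i, c i • v i‖ < δ / C := by rwa [← dist_eq_norm]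
    have hdsmall : ∀ i, |d i| < δ := by
      intro i
      calc |d i| ≤ C * ‖y - ∑ i, c i • v i‖ := hdbd i
        _ < C * (δ / C) := by exact mul_lt_mul_of_pos_left hznorm hC
        _ = δ := by field_simp
    refine ⟨fun i => c i + d i, ?_, ?_, ?_⟩
    · intro i
      show 0 ≤ c i + d i
      by_cases hi : i ∈ S
      · have h1 := hδle i hi
        have h2 := (abs_lt.mp (hdsmall i)).1
        linarith
      · rw [hcsupp i hi, hdsupp i hi]; simp
    · intro i hi
      show c i + d i = 0
      rw [hcsupp i hi, hdsupp i hi, add_zero]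
    · have : y = (∑ i, c i • v i) + (y - ∑ i, c i • v i) := by abel
      rw [this, hzd, ← Finset.sum_add_distrib]
      apply Finset.sum_congr rfl
      intro i _
      rw [add_smul]

end Char

/-- The relative interiors of the Gale dual cones
`cone{γ i : i ∉ I}` and `cone{γ j : j ∉ J}` intersect iff there is `w ∈ W`
with `a i w = 0` on `I ∩ J`, `a i w > 0` on `J \ I`, `a i w < 0` on `I \ J`;
moreover for any such `w` the cones `cone{a i : i ∈ I}` and `cone{a j : j ∈ J}`
intersect in the common face `cone{a i : i ∈ I ∩ J}`, cut out on
`cone{a i : i ∈ I}` by the hyperplane `ξ(w) = 0`. -/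
theorem stmt4 {V : Type*} [NormedAddCommGroup V] [NormedSpace ℝ V]
    [FiniteDimensional ℝ V] {m : ℕ} (γ : Fin m → (V →L[ℝ] ℝ))
    (hspan : Submodule.span ℝ (Set.range γ) = ⊤)
    (W : Submodule ℝ (Fin m → ℝ))
    (hW : ∀ y : Fin m → ℝ, y ∈ W ↔ ∑ i, y i • γ i = 0)
    (a : Fin m → (W →L[ℝ] ℝ))
    (ha : ∀ (i : Fin m) (w : W), a i w = (w : Fin m → ℝ) i)
    (I J : Set (Fin m)) :
    ((intrinsicInterior ℝ (coneOf γ Iᶜ) ∩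
        intrinsicInterior ℝ (coneOf γ Jᶜ)).Nonempty ↔
      ∃ w : W, (∀ i ∈ I ∩ J, a i w = 0) ∧ (∀ i ∈ J \ I, 0 < a i w) ∧
        ∀ i ∈ I \ J, a i w < 0) ∧
    (∀ w : W, (∀ i ∈ I ∩ J, a i w = 0) → (∀ i ∈ J \ I, 0 < a i w) →
      (∀ i ∈ I \ J, a i w < 0) →
      coneOf a I ∩ coneOf a J = coneOf a (I ∩ J) ∧
        coneOf a (I ∩ J) = {ξ ∈ coneOf a I | ξ w = 0}) := by
  classical
  constructor
  · -- Part 1: the iff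
    constructor
    · rintro ⟨x, hxI, hxJ⟩
      rw [mem_intrinsicInterior_coneOf] at hxI hxJ
      obtain ⟨c, hcpos, hcsupp, hxc⟩ := hxI
      obtain ⟨d, hdpos, hdsupp, hxd⟩ := hxJ
      have hw : (c - d) ∈ W := by
        rw [hW]
        have : ∑ i, (c - d) i • γ i = (∑ i, c i • γ i) - ∑ i, d i • γ i := by
          rw [← Finset.sum_sub_distrib]
          exact Finset.sum_congr rfl fun i _ => by rw [Pi.sub_apply]; exact sub_smul (c i) (d i) (γ i)
        rw [this, ← hxc, ← hxd, sub_self]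
      refine ⟨⟨c - d, hw⟩, ?_, ?_, ?_⟩
      · rintro i ⟨hiI, hiJ⟩
        rw [ha]
        show c i - d i = 0
        rw [hcsupp i (by simpa using hiI), hdsupp i (by simpa using hiJ), sub_self]
      · rintro i ⟨hiJ, hiI⟩
        rw [ha]
        show 0 < c i - d i
        rw [hdsupp i (by simpa using hiJ)]
        have := hcpos i (by simpa using hiI)
        linarith
      · rintro i ⟨hiI, hiJ⟩
        rw [ha]
        show c i - d i < 0
        rw [hcsupp i (by simpa using hiI)]
        have := hdpos i (by simpa using hiJ)
        linarith
    · rintro ⟨w, h0, hpos, hneg⟩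
      set wf : Fin m → ℝ := (w : Fin m → ℝ) with hwf
      set c : Fin m → ℝ := fun i =>
        if i ∈ I then 0 else if i ∈ J then wf i else |wf i| + 1 with hc
      set d : Fin m → ℝ := fun i => c i - wf i with hd
      have hΓ : ∑ i, wf i • γ i = 0 := (hW wf).mp w.2
      have hsum : ∑ i, c i • γ i = ∑ i, d i • γ i := by
        have h : (∑ i, c i • γ i) - ∑ i, d i • γ i = ∑ i, wf i • γ i := by
          rw [← Finset.sum_sub_distrib]
          apply Finset.sum_congr rfl
          intro i _
          refine (sub_smul _ _ _).symm.trans ?_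
          congr 1
          show c i - (c i - wf i) = wf i
          ring
        rw [hΓ] at h
        exact sub_eq_zero.mp h
      refine ⟨∑ i, c i • γ i, ?_, ?_⟩
      · rw [mem_intrinsicInterior_coneOf]
        refine ⟨c, ?_, ?_, rfl⟩
        · intro i hi
          have hiI : i ∉ I := hi
          show 0 < if i ∈ I then 0 else if i ∈ J then wf i else |wf i| + 1
          rw [if_neg hiI]
          by_cases hiJ : i ∈ J
          · rw [if_pos hiJ]
            have := hpos i ⟨hiJ, hiI⟩
            rwa [ha] at this
          · rw [if_neg hiJ]
            have := abs_nonneg (wf i)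
            linarith
        · intro i hi
          have hiI : i ∈ I := by simpa using hi
          show (if i ∈ I then 0 else if i ∈ J then wf i else |wf i| + 1) = 0
          rw [if_pos hiI]
      · rw [mem_intrinsicInterior_coneOf]
        refine ⟨d, ?_, ?_, hsum⟩
        · intro i hi
          have hiJ : i ∉ J := hi
          show 0 < c i - wf i
          by_cases hiI : i ∈ I
          · have hwneg : wf i < 0 := by
              have := hneg i ⟨hiI, hiJ⟩
              rwa [ha] at this
            have : c i = 0 := by show (if i ∈ I then _ else _) = 0; rw [if_pos hiI]
            rw [this]
            linarith
          · have : c i = |wf i| + 1 := by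
              show (if i ∈ I then _ else _) = _
              rw [if_neg hiI, if_neg hiJ]
            rw [this]
            have := le_abs_self (wf i)
            linarith
        · intro i hi
          have hiJ : i ∈ J := by simpa using hi
          show c i - wf i = 0
          by_cases hiI : i ∈ I
          · have hw0 : wf i = 0 := by
              have := h0 i ⟨hiI, hiJ⟩
              rwa [ha] at this
            have : c i = 0 := by show (if i ∈ I then _ else _) = 0; rw [if_pos hiI]
            rw [this, hw0, sub_zero]
          · have : c i = wf i := by
              show (if i ∈ I then _ else _) = _
              rw [if_neg hiI, if_pos hiJ]
            rw [this, sub_self]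
  · -- Part 2
    intro w h0 hpos hneg
    have happly : ∀ c : Fin m → ℝ, (∑ i, c i • a i) w = ∑ i, c i * a i w := by
      intro c
      rw [ContinuousLinearMap.sum_apply]
      exact Finset.sum_congr rfl fun i _ => rfl
    have hIterm : ∀ c : Fin m → ℝ, (∀ i, 0 ≤ c i) → (∀ i ∉ I, c i = 0) →
        ∀ i, c i * a i w ≤ 0 := by
      intro c hc hsupp i
      by_cases hiI : i ∈ I
      · by_cases hiJ : i ∈ J
        · rw [h0 i ⟨hiI, hiJ⟩, mul_zero]
        · have := hneg i ⟨hiI, hiJ⟩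
          nlinarith [hc i]
      · rw [hsupp i hiI, zero_mul]
    have hE2 : coneOf a (I ∩ J) = {ξ ∈ coneOf a I | ξ w = 0} := by
      ext ξ
      constructor
      · rintro ⟨c, hc, hsupp, rfl⟩
        refine ⟨coneOf_mono a Set.inter_subset_left ⟨c, hc, hsupp, rfl⟩, ?_⟩
        rw [happly]
        apply Finset.sum_eq_zero
        intro i _
        by_cases hi : i ∈ I ∩ J
        · rw [h0 i hi, mul_zero]
        · rw [hsupp i hi, zero_mul]
      · rintro ⟨⟨c, hc, hsupp, rfl⟩, hw0⟩
        rw [happly] at hw0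
        have hz := (Finset.sum_eq_zero_iff_of_nonpos
          fun i _ => hIterm c hc hsupp i).mp hw0
        refine ⟨c, hc, ?_, rfl⟩
        intro i hi
        by_cases hiI : i ∈ I
        · have hiJ : i ∉ J := fun h => hi ⟨hiI, h⟩
          have hne : a i w ≠ 0 := ne_of_lt (hneg i ⟨hiI, hiJ⟩)
          exact (mul_eq_zero.mp (hz i (Finset.mem_univ i))).resolve_right hne
        · exact hsupp i hiI
    refine ⟨?_, hE2⟩
    apply Set.Subset.antisymm
    · rintro ξ ⟨hξI, hξJ⟩
      obtain ⟨c, hcnn, hcsupp, hξc⟩ := hξI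
      obtain ⟨d, hdnn, hdsupp, hξd⟩ := hξJ
      have h1 : ξ w ≤ 0 := by
        rw [hξc, happly]
        exact Finset.sum_nonpos fun i _ => hIterm c hcnn hcsupp i
      have h2 : 0 ≤ ξ w := by
        rw [hξd, happly]
        apply Finset.sum_nonneg
        intro i _
        by_cases hiJ : i ∈ J
        · by_cases hiI : i ∈ I
          · rw [h0 i ⟨hiI, hiJ⟩, mul_zero]
          · exact mul_nonneg (hdnn i) (le_of_lt (hpos i ⟨hiJ, hiI⟩))
        · rw [hdsupp i hiJ, zero_mul]
      rw [hE2]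
      exact ⟨⟨c, hcnn, hcsupp, hξc⟩, le_antisymm h1 h2⟩
    · exact Set.subset_inter (coneOf_mono a Set.inter_subset_left)
        (coneOf_mono a Set.inter_subset_right)
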